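/- arXiv:1611.01020 — 4 statements merged into one kernel-verified Lean document; each statement's English description precedes it below -/
import Mathlib

section
/- If P is an orthogonal projection on a Hilbert space H and X is a bounded operator satisfying Re⟨e^{X}ψ, ψ⟩ ≥ ρ‖ψ‖² for all ψ ∈ H with ρ > 0, then the operator I + P(e^X − I)P is invertible with ‖(I + P(e^X − I)P)^{-1}‖ ≤ 1/min(ρ,1). -/
/-- If `P` is an orthogonal projection and `Re⟨e^X ψ, ψ⟩ ≥ ρ‖ψ‖²` with `ρ > 0`,
then `I + P(e^X − I)P` is invertible with inverse of norm at most `1/min(ρ,1)`. -/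
theorem stmt13 {H : Type*} [NormedAddCommGroup H] [InnerProductSpace ℂ H] [CompleteSpace H]
    (P X : H →L[ℂ] H) (hP2 : P * P = P) (hPadj : ContinuousLinearMap.adjoint P = P)
    (ρ : ℝ) (hρ : 0 < ρ)
    (hX : ∀ ψ : H, ρ * ‖ψ‖ ^ 2 ≤ (inner ℂ ((NormedSpace.exp X) ψ) ψ : ℂ).re) :
    ∃ B : H →L[ℂ] H,
      (1 + P * (NormedSpace.exp X - 1) * P) * B = 1 ∧
      B * (1 + P * (NormedSpace.exp X - 1) * P) = 1 ∧
      ‖B‖ ≤ 1 / min ρ 1 := by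
  set E := NormedSpace.exp X with hE
  set T : H →L[ℂ] H := 1 + P * (E - 1) * P with hT
  set c : ℝ := min ρ 1 with hc
  have hc0 : 0 < c := lt_min hρ one_pos
  -- P is self-adjoint in inner ℂ products
  have hPsym : ∀ x y : H, (inner ℂ (P x) y : ℂ) = inner ℂ x (P y) := by
    intro x y
    conv_lhs => rw [← hPadj]
    exact ContinuousLinearMap.adjoint_inner_left P y x
  -- ‖P ψ‖ ≤ ‖ψ‖
  have hPnorm : ∀ ψ : H, ‖P ψ‖ ≤ ‖ψ‖ := by
    intro ψ
    have h1 : (inner ℂ (P ψ) ψ : ℂ) = inner ℂ (P ψ) (P ψ) := by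
      conv_lhs => rw [show P ψ = P (P ψ) by rw [← ContinuousLinearMap.mul_apply, hP2]]
      rw [hPsym]
    have h2 : ‖P ψ‖ ^ 2 = ‖(inner ℂ (P ψ) ψ : ℂ)‖ := by
      rw [h1, inner_self_eq_norm_sq_to_K]
      simp [Complex.norm_real]
    have h3 : ‖(inner ℂ (P ψ) ψ : ℂ)‖ ≤ ‖P ψ‖ * ‖ψ‖ := norm_inner_le_norm _ _
    nlinarith [norm_nonneg (P ψ), norm_nonneg ψ]
  -- coercivity
  have hcoer : ∀ ψ : H, c * ‖ψ‖ ^ 2 ≤ (inner ℂ (T ψ) ψ : ℂ).re := by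
    intro ψ
    have hTψ : T ψ = ψ + P ((E (P ψ)) - P ψ) := by
      simp [hT, ContinuousLinearMap.add_apply, ContinuousLinearMap.mul_apply,
        ContinuousLinearMap.sub_apply, ContinuousLinearMap.one_apply]
    have hinner : (inner ℂ (T ψ) ψ : ℂ)
        = inner ℂ ψ ψ + inner ℂ (E (P ψ)) (P ψ) - inner ℂ (P ψ) (P ψ) := by
      rw [hTψ, inner_add_left, hPsym, inner_sub_left]
      ring
    have hre : (inner ℂ (T ψ) ψ : ℂ).re
        = ‖ψ‖ ^ 2 + (inner ℂ (E (P ψ)) (P ψ) : ℂ).re - ‖P ψ‖ ^ 2 := by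
      rw [hinner]
      simp [inner_self_eq_norm_sq_to_K, ← Complex.ofReal_pow]
    rw [hre]
    have h4 := hX (P ψ)
    have h5 := hPnorm ψ
    have hsq : ‖P ψ‖ ^ 2 ≤ ‖ψ‖ ^ 2 := pow_le_pow_left₀ (norm_nonneg _) h5 2
    rcases min_cases ρ 1 with ⟨h6, h7⟩ | ⟨h6, h7⟩ <;> rw [hc, h6] <;>
      nlinarith [hsq, h4]
  -- lower bound ‖T ψ‖ ≥ c ‖ψ‖
  have hlow : ∀ ψ : H, c * ‖ψ‖ ≤ ‖T ψ‖ := by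
    intro ψ
    have h1 := hcoer ψ
    have h2 : (inner ℂ (T ψ) ψ : ℂ).re ≤ ‖(inner ℂ (T ψ) ψ : ℂ)‖ := Complex.re_le_norm _
    have h3 : ‖(inner ℂ (T ψ) ψ : ℂ)‖ ≤ ‖T ψ‖ * ‖ψ‖ := norm_inner_le_norm _ _
    rcases eq_or_lt_of_le (norm_nonneg ψ) with h | h
    · simp [← h]
    · nlinarith
  -- injectivity
  have hker : LinearMap.ker (T : H →ₗ[ℂ] H) = ⊥ := by
    rw [LinearMap.ker_eq_bot']
    intro ψ hψ
    have := hlow ψ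
    rw [show T ψ = 0 from hψ] at this
    simp only [norm_zero] at this
    have : ‖ψ‖ ≤ 0 := by nlinarith
    simpa [norm_le_zero_iff] using this
  -- closed range
  have hanti : AntilipschitzWith (⟨c, hc0.le⟩ : NNReal)⁻¹ T := by
    apply ContinuousLinearMap.antilipschitz_of_bound
    intro x
    show ‖x‖ ≤ c⁻¹ * ‖T x‖
    rw [inv_mul_eq_div, le_div_iff₀ hc0, mul_comm]
    exact hlow x
  have hclosed : IsClosed (Set.range T) := hanti.isClosed_range T.uniformContinuous
  have hrange_closed : IsClosed ((LinearMap.range (T : H →ₗ[ℂ] H) : Submodule ℂ H) : Set H) := by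
    simpa [LinearMap.coe_range] using hclosed
  haveI : CompleteSpace (LinearMap.range (T : H →ₗ[ℂ] H) : Submodule ℂ H) :=
    hrange_closed.completeSpace_coe
  -- surjectivity
  have hsurj : LinearMap.range (T : H →ₗ[ℂ] H) = ⊤ := by
    rw [← Submodule.orthogonal_eq_bot_iff]
    rw [Submodule.eq_bot_iff]
    intro x hx
    have h0 : (inner ℂ (T x) x : ℂ) = 0 :=
      hx (T x) (LinearMap.mem_range_self (T : H →ₗ[ℂ] H) x)
    have h1 := hcoer x
    rw [h0] at h1
    simp only [Complex.zero_re] at h1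
    have : ‖x‖ ^ 2 ≤ 0 := by nlinarith
    have : ‖x‖ = 0 := by nlinarith [norm_nonneg x, sq_nonneg ‖x‖]
    simpa using this
  -- invert
  set e := ContinuousLinearEquiv.ofBijective T hker hsurj with he
  refine ⟨(e.symm : H →L[ℂ] H), ?_, ?_, ?_⟩
  · ext x
    simp [ContinuousLinearMap.mul_apply]
    have : T ((e.symm) x) = x := by
      have := e.apply_symm_apply x
      rwa [ContinuousLinearEquiv.coeFn_ofBijective] at this
    simpa using this
  · ext x
    simp [ContinuousLinearMap.mul_apply]
    have : e.symm (T x) = x := by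
      have := e.symm_apply_apply x
      rwa [ContinuousLinearEquiv.coeFn_ofBijective] at this
    simpa using this
  · apply ContinuousLinearMap.opNorm_le_bound _ (by positivity)
    intro x
    have hTe : T ((e.symm) x) = x := by
      have := e.apply_symm_apply x
      rwa [ContinuousLinearEquiv.coeFn_ofBijective] at this
    have := hlow ((e.symm) x)
    rw [hTe] at this
    rw [one_div, inv_mul_eq_div, le_div_iff₀ hc0, mul_comm]
    exact this
end

section
/- Let U and L be bounded operators on ℓ²(ℕ) with L lower triangular and U upper triangular (with respect to the standard basis), i.e., P_n L P_n = P_n L and P_n U P_n = U P_n for every n, where P_n projects onto the first n coordinates. Suppose further that e^{-L}e^{L+U}e^{-U} − I is trace class. Then for every n, det(Q_n + P_n e^{L+U} P_n)·e^{−Tr P_n(L+U)P_n} = det(I + P_n(e^{-L}e^{L+U}e^{-U} − I)P_n), where Q_n = I − P_n. -/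
noncomputable section
namespace Stmt14Aux
open scoped Nat

lemma conj_pow_left {M : Type*} [Monoid M] {p x : M} (hp : p * p = p)
    (hx : p * x = p * x * p) (m : ℕ) : p * x ^ m = p * x ^ m * p := by
  induction m with
  | zero => simpa using hp.symm
  | succ m ih =>
      calc p * x ^ (m + 1) = p * x ^ m * x := by rw [pow_succ, mul_assoc]
        _ = p * x ^ m * p * x := congrArg (· * x) ih
        _ = p * x ^ m * (p * x) := by simp only [mul_assoc]
        _ = p * x ^ m * (p * x * p) := congrArg (p * x ^ m * ·) hx
        _ = p * x ^ m * p * x * p := by simp only [mul_assoc]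
        _ = p * x ^ m * x * p := congrArg (fun z => z * x * p) ih.symm
        _ = p * x ^ (m + 1) * p := by rw [pow_succ]; simp only [mul_assoc]

lemma conj_pow_right {M : Type*} [Monoid M] {p x : M} (hp : p * p = p)
    (hx : x * p = p * x * p) (m : ℕ) : x ^ m * p = p * x ^ m * p := by
  induction m with
  | zero => simpa using hp.symm
  | succ m ih =>
      calc x ^ (m + 1) * p = x ^ m * (x * p) := by rw [pow_succ, mul_assoc]
        _ = x ^ m * (p * x * p) := congrArg (x ^ m * ·) hx
        _ = x ^ m * p * (x * p) := by simp only [mul_assoc]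
        _ = p * x ^ m * p * (x * p) := congrArg (· * (x * p)) ih
        _ = p * x ^ m * (p * x * p) := by simp only [mul_assoc]
        _ = p * x ^ m * (x * p) := congrArg (p * x ^ m * ·) hx.symm
        _ = p * x ^ (m + 1) * p := by rw [pow_succ]; simp only [mul_assoc]

abbrev H : Type := lp (fun _ : ℕ => ℂ) 2
abbrev A : Type := H →L[ℂ] H

/-- coordinate evaluation as a CLM -/
def ev (j : ℕ) : H →L[ℂ] ℂ :=
  LinearMap.mkContinuous
    { toFun := fun x => x j
      map_add' := fun x y => by simp [lp.coeFn_add]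
      map_smul' := fun c x => by simp [lp.coeFn_smul] }
    1
    (fun x => by
      show ‖x j‖ ≤ 1 * ‖x‖
      simpa using lp.norm_apply_le_norm (by norm_num : (2 : ENNReal) ≠ 0) x j)

@[simp] lemma ev_apply (j : ℕ) (x : H) : ev j x = x j := rfl

def e (k : ℕ) : H := lp.single 2 k 1

lemma e_apply (k m : ℕ) : (e k : ∀ _ : ℕ, ℂ) m = if m = k then 1 else 0 := by
  rcases eq_or_ne m k with h | h
  · subst h; simp [e, lp.single_apply_self]
  · simp [e, lp.single_apply_ne _ _ _ h, h]

section
variable (P : ℕ → A)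
  (hP : ∀ (n : ℕ) (x : H) (k : ℕ), (P n x) k = if k < n then x k else 0)

include hP

lemma P_e_lt {k n : ℕ} (h : k < n) : P n (e k) = e k := by
  apply lp.ext; funext m
  rw [hP n (e k) m]
  rcases lt_or_ge m n with hm | hm
  · simp [hm]
  · rw [if_neg (not_lt.2 hm), e_apply]
    have : m ≠ k := by omega
    simp [this]

lemma P_e_ge {k n : ℕ} (h : n ≤ k) : P n (e k) = 0 := by
  apply lp.ext; funext m
  rw [hP n (e k) m]
  have h0 : ((0 : H) : ∀ _ : ℕ, ℂ) m = 0 := rfl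
  rw [h0, e_apply]
  rcases lt_or_ge m n with hm | hm
  · have : m ≠ k := by omega
    simp [hm, this]
  · simp [not_lt.2 hm]

lemma Pidem (n : ℕ) : P n * P n = P n := by
  apply ContinuousLinearMap.ext; intro x
  apply lp.ext; funext m
  simp only [ContinuousLinearMap.mul_apply, hP]
  split_ifs with h <;> simp [h]

lemma Ptrunc (n : ℕ) (x : H) : P n x = ∑ i : Fin n, x (i : ℕ) • e (i : ℕ) := by
  apply lp.ext; funext m
  rw [hP n x m, lp.coeFn_sum, Finset.sum_apply]
  have hterm : ∀ i : Fin n,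
      ((x (i : ℕ) • e (i : ℕ) : H) : ∀ _ : ℕ, ℂ) m
        = if m = (i : ℕ) then x m else 0 := by
    intro i
    rw [lp.coeFn_smul, Pi.smul_apply, e_apply, smul_eq_mul]
    rcases eq_or_ne m (i : ℕ) with h | h
    · subst h; simp
    · simp [h]
  rw [Finset.sum_congr rfl fun i _ => hterm i]
  rcases lt_or_ge m n with hm | hm
  · rw [if_pos hm]
    rw [Finset.sum_eq_single (⟨m, hm⟩ : Fin n)]
    · simp
    · intro i _ hi
      have : m ≠ (i : ℕ) := fun h => hi (by ext; simp [h.symm])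
      simp [this]
    · simp
  · rw [if_neg (not_lt.2 hm)]
    symm
    apply Finset.sum_eq_zero
    intro i _
    have : m ≠ (i : ℕ) := by omega
    simp [this]

/-- key expansion: evaluate `S (P n y)` coordinatewise. -/
lemma expand (S : A) (y : H) (n j : ℕ) :
    ev j (S (P n y)) = ∑ i : Fin n, ev (i : ℕ) y * ev j (S (e (i : ℕ))) := by
  rw [Ptrunc P hP n y, map_sum S (fun i : Fin n => y (i : ℕ) • e (i : ℕ)) Finset.univ,
    map_sum (ev j) (fun i : Fin n => S (y (i : ℕ) • e (i : ℕ))) Finset.univ]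
  refine Finset.sum_congr rfl fun i _ => ?_
  rw [map_smul, map_smul, smul_eq_mul]
  rfl

lemma left_pow {X : A} (hX : ∀ n, P n * X = P n * X * P n) (n m : ℕ) :
    P n * X ^ m = P n * X ^ m * P n :=
  conj_pow_left (Pidem P hP n) (hX n) m

lemma right_pow {X : A} (hX : ∀ n, X * P n = P n * X * P n) (n m : ℕ) :
    X ^ m * P n = P n * X ^ m * P n :=
  conj_pow_right (Pidem P hP n) (hX n) m

lemma left_exp {X : A} (hX : ∀ n, P n * X = P n * X * P n) (n : ℕ) :
    P n * NormedSpace.exp X = P n * NormedSpace.exp X * P n := by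
  have hs : Summable fun m : ℕ => ((m ! : ℂ))⁻¹ • X ^ m :=
    NormedSpace.expSeries_summable' X
  have key : ∀ f : A →L[ℂ] A,
      f (NormedSpace.exp X) = ∑' m : ℕ, f (((m ! : ℂ))⁻¹ • X ^ m) := fun f => by
    rw [NormedSpace.exp_eq_tsum ℂ]; exact ContinuousLinearMap.map_tsum f hs
  have h1 := key (ContinuousLinearMap.mul ℂ A (P n))
  have h2 := key (((ContinuousLinearMap.mul ℂ A).flip (P n)).comp
    (ContinuousLinearMap.mul ℂ A (P n)))
  simp only [ContinuousLinearMap.mul_apply', ContinuousLinearMap.comp_apply,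
    ContinuousLinearMap.flip_apply, smul_mul_assoc, mul_smul_comm] at h1 h2
  rw [h2, h1]
  exact tsum_congr fun m => by rw [← left_pow P hP hX n m]

lemma right_exp {X : A} (hX : ∀ n, X * P n = P n * X * P n) (n : ℕ) :
    NormedSpace.exp X * P n = P n * NormedSpace.exp X * P n := by
  have hs : Summable fun m : ℕ => ((m ! : ℂ))⁻¹ • X ^ m :=
    NormedSpace.expSeries_summable' X
  have key : ∀ f : A →L[ℂ] A,
      f (NormedSpace.exp X) = ∑' m : ℕ, f (((m ! : ℂ))⁻¹ • X ^ m) := fun f => by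
    rw [NormedSpace.exp_eq_tsum ℂ]; exact ContinuousLinearMap.map_tsum f hs
  have h1 := key ((ContinuousLinearMap.mul ℂ A).flip (P n))
  have h2 := key (((ContinuousLinearMap.mul ℂ A).flip (P n)).comp
    (ContinuousLinearMap.mul ℂ A (P n)))
  simp only [ContinuousLinearMap.mul_apply', ContinuousLinearMap.comp_apply,
    ContinuousLinearMap.flip_apply, smul_mul_assoc, mul_smul_comm] at h1 h2
  rw [h2, h1]
  exact tsum_congr fun m => by rw [right_pow P hP hX n m]

/-- lower-triangular operators have vanishing entries above the diagonal -/
lemma lower_zero {X : A} (hX : ∀ n, P n * X = P n * X * P n) {j k : ℕ} (h : j < k) :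
    ev j (X (e k)) = 0 := by
  have h1 : ev j (X (e k)) = ev j (P k (X (e k))) := by
    rw [ev_apply, ev_apply, hP k _ j, if_pos h]
  rw [h1, ← ContinuousLinearMap.mul_apply, hX k]
  rw [ContinuousLinearMap.mul_apply, ContinuousLinearMap.mul_apply,
    P_e_ge P hP (le_refl k)]
  simp

/-- upper-triangular operators have vanishing entries below the diagonal -/
lemma upper_zero {X : A} (hX : ∀ n, X * P n = P n * X * P n) {j k : ℕ} (h : k < j) :
    ev j (X (e k)) = 0 := by
  have h1 : X (e k) = P j (X (P j (e k))) := by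
    conv_lhs => rw [← P_e_lt P hP h, ← ContinuousLinearMap.mul_apply, hX j]
    rfl
  rw [h1, ev_apply, hP j _ j]
  simp

def blk (n : ℕ) (T : A) : Matrix (Fin n) (Fin n) ℂ :=
  Matrix.of fun j k : Fin n => ev (j : ℕ) (T (e (k : ℕ)))

lemma blk_mul_right (S : A) {T : A} (hT : ∀ n, T * P n = P n * T * P n) (n : ℕ) :
    blk n (S * T) = blk n S * blk n T := by
  ext j k
  have hk : T (e (k : ℕ)) = P n (T (e (k : ℕ))) := by
    conv_lhs => rw [← P_e_lt P hP k.isLt, ← ContinuousLinearMap.mul_apply, hT n]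
    rw [ContinuousLinearMap.mul_apply, ContinuousLinearMap.mul_apply,
      P_e_lt P hP k.isLt]
  show ev (j : ℕ) ((S * T) (e (k : ℕ))) = _
  rw [ContinuousLinearMap.mul_apply, hk, expand P hP]
  rw [Matrix.mul_apply]
  exact Finset.sum_congr rfl fun i _ => by rw [mul_comm]; rfl

lemma blk_mul_left {S : A} (hS : ∀ n, P n * S = P n * S * P n) (T : A) (n : ℕ) :
    blk n (S * T) = blk n S * blk n T := by
  ext j k
  show ev (j : ℕ) (S (T (e (k : ℕ)))) = _
  set y := T (e (k : ℕ)) with hy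
  have h1 : ev (j : ℕ) (S y) = ev (j : ℕ) (P n (S (P n y))) := by
    rw [show P n (S (P n y)) = (P n * S * P n) y from rfl, ← hS n]
    rw [ev_apply, ev_apply, show ((P n * S) y : H) = P n (S y) from rfl,
      hP n _ (j : ℕ), if_pos j.isLt]
  have h2 : ev (j : ℕ) (P n (S (P n y))) = ev (j : ℕ) (S (P n y)) := by
    rw [ev_apply, ev_apply, hP n _ (j : ℕ), if_pos j.isLt]
  rw [h1, h2, expand P hP, Matrix.mul_apply]
  exact Finset.sum_congr rfl fun i _ => by rw [mul_comm]; rfl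

lemma diag_pow_left {X : A} (hX : ∀ n, P n * X = P n * X * P n) (j m : ℕ) :
    ev j ((X ^ m) (e j)) = (ev j (X (e j))) ^ m := by
  induction m with
  | zero => simp [ContinuousLinearMap.one_apply, e_apply]
  | succ m ih =>
      set y : H := (X ^ m) (e j) with hy
      have step1 : ev j ((X ^ (m + 1)) (e j)) = ev j (X (P (j + 1) y)) := by
        rw [pow_succ', ContinuousLinearMap.mul_apply, ← hy]
        have h1 : ev j (X y) = ev j (P (j + 1) (X y)) := by
          rw [ev_apply, ev_apply, hP (j + 1) _ j, if_pos (lt_add_one j)]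
        rw [h1, show P (j + 1) (X y) = (P (j + 1) * X) y from rfl, hX (j + 1)]
        rw [show ((P (j + 1) * X * P (j + 1)) y : H) = P (j + 1) (X (P (j + 1) y)) from rfl]
        rw [ev_apply, ev_apply, hP (j + 1) _ j, if_pos (lt_add_one j)]
      rw [step1, expand P hP X y (j + 1) j]
      rw [Finset.sum_eq_single (Fin.last j)]
      · rw [Fin.val_last, ih, ← pow_succ]
      · intro i _ hi
        have hij : (i : ℕ) < j := by
          have := i.isLt
          have : (i : ℕ) ≠ j := fun h => hi (by ext; simp [h])
          omega
        rw [hy, lower_zero P hP (fun n => left_pow P hP hX n m) hij, zero_mul]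
      · simp

lemma diag_pow_right {X : A} (hX : ∀ n, X * P n = P n * X * P n) (j m : ℕ) :
    ev j ((X ^ m) (e j)) = (ev j (X (e j))) ^ m := by
  induction m with
  | zero => simp [ContinuousLinearMap.one_apply, e_apply]
  | succ m ih =>
      have hXe : X (e j) = P (j + 1) (X (e j)) := by
        conv_lhs => rw [← P_e_lt P hP (lt_add_one j), ← ContinuousLinearMap.mul_apply,
          hX (j + 1)]
        rw [ContinuousLinearMap.mul_apply, ContinuousLinearMap.mul_apply,
          P_e_lt P hP (lt_add_one j)]
      have step1 : ev j ((X ^ (m + 1)) (e j)) = ev j ((X ^ m) (P (j + 1) (X (e j)))) := by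
        rw [pow_succ, ContinuousLinearMap.mul_apply, ← hXe]
      rw [step1, expand P hP (X ^ m) (X (e j)) (j + 1) j]
      rw [Finset.sum_eq_single (Fin.last j)]
      · rw [Fin.val_last, ih, pow_succ']
      · intro i _ hi
        have hij : (i : ℕ) < j := by
          have := i.isLt
          have : (i : ℕ) ≠ j := fun h => hi (by ext; simp [h])
          omega
        rw [upper_zero P hP (fun n => right_pow P hP hX n m) hij, mul_zero]
      · simp

omit hP in
lemma diag_exp (X : A) (j : ℕ)
    (hpow : ∀ m : ℕ, ev j ((X ^ m) (e j)) = (ev j (X (e j))) ^ m) :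
    ev j ((NormedSpace.exp X) (e j)) = Complex.exp (ev j (X (e j))) := by
  have hs : Summable fun m : ℕ => ((m ! : ℂ))⁻¹ • X ^ m :=
    NormedSpace.expSeries_summable' X
  have key := ContinuousLinearMap.map_tsum
    ((ev j).comp (ContinuousLinearMap.apply ℂ H (e j))) hs
  rw [NormedSpace.exp_eq_tsum ℂ]
  have h1 : ev j ((∑' m : ℕ, ((m ! : ℂ))⁻¹ • X ^ m) (e j))
      = ∑' m : ℕ, ((m ! : ℂ))⁻¹ • ev j ((X ^ m) (e j)) := by
    simpa using key
  rw [h1, Complex.exp_eq_exp_ℂ, NormedSpace.exp_eq_tsum ℂ]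
  exact tsum_congr fun m => by rw [hpow m]

omit hP in
lemma blk_one (n : ℕ) : blk n (1 : A) = 1 := by
  ext j k
  show ev (j : ℕ) ((1 : A) (e (k : ℕ))) = _
  rw [ContinuousLinearMap.one_apply, ev_apply, e_apply, Matrix.one_apply]
  simp [Fin.val_inj]

lemma det_exp_left {X : A} (hX : ∀ n, P n * X = P n * X * P n) (n : ℕ) :
    (blk n (NormedSpace.exp X)).det
      = Complex.exp (∑ j : Fin n, ev (j : ℕ) (X (e (j : ℕ)))) := by
  have htri : (blk n (NormedSpace.exp X)).BlockTriangular OrderDual.toDual := by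
    intro i k h
    exact lower_zero P hP (fun m => left_exp P hP hX m) (show (i : ℕ) < (k : ℕ) from h)
  rw [Matrix.det_of_lowerTriangular _ htri, Complex.exp_sum]
  exact Finset.prod_congr rfl fun j _ =>
    diag_exp X (j : ℕ) (fun m => diag_pow_left P hP hX (j : ℕ) m)

lemma det_exp_right {X : A} (hX : ∀ n, X * P n = P n * X * P n) (n : ℕ) :
    (blk n (NormedSpace.exp X)).det
      = Complex.exp (∑ j : Fin n, ev (j : ℕ) (X (e (j : ℕ)))) := by
  have htri : (blk n (NormedSpace.exp X)).BlockTriangular id := by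
    intro i k h
    exact upper_zero P hP (fun m => right_exp P hP hX m) (show (k : ℕ) < (i : ℕ) from h)
  rw [Matrix.det_of_upperTriangular htri, Complex.exp_sum]
  exact Finset.prod_congr rfl fun j _ =>
    diag_exp X (j : ℕ) (fun m => diag_pow_right P hP hX (j : ℕ) m)

end
end Stmt14Aux


open Stmt14Aux

/-- For `L` lower triangular and `U` upper triangular on `ℓ²(ℕ)` (triangularity
expressed via `P_n L P_n = P_n L` and `P_n U P_n = U P_n`), with
`e^{-L}e^{L+U}e^{-U} − I` trace class (here: entrywise absolutely summable), one has
`det(Q_n + P_n e^{L+U} P_n)·e^{−Tr P_n(L+U)P_n}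
  = det(I + P_n(e^{-L}e^{L+U}e^{-U} − I)P_n)` for every `n`, both sides being
determinants of the corresponding `n×n` blocks. -/
theorem stmt14 (L U : lp (fun _ : ℕ => ℂ) 2 →L[ℂ] lp (fun _ : ℕ => ℂ) 2)
    (P : ℕ → (lp (fun _ : ℕ => ℂ) 2 →L[ℂ] lp (fun _ : ℕ => ℂ) 2))
    (hP : ∀ (n : ℕ) (x : lp (fun _ : ℕ => ℂ) 2) (k : ℕ), (P n x) k = if k < n then x k else 0)
    (hL : ∀ n, P n * L * P n = P n * L)
    (hU : ∀ n, P n * U * P n = U * P n)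
    (hTC : Summable fun p : ℕ × ℕ =>
      ‖((NormedSpace.exp (-L) * NormedSpace.exp (L + U) * NormedSpace.exp (-U) - 1)
          (lp.single 2 p.2 1)) p.1‖)
    (n : ℕ) :
    Matrix.det (Matrix.of fun j k : Fin n =>
        ((NormedSpace.exp (L + U)) (lp.single 2 (k : ℕ) 1)) (j : ℕ)) *
      Complex.exp (-(∑ j : Fin n, ((L + U) (lp.single 2 (j : ℕ) 1)) (j : ℕ))) =
    Matrix.det (Matrix.of fun j k : Fin n =>
        (if j = k then 1 else 0) +
          ((NormedSpace.exp (-L) * NormedSpace.exp (L + U) * NormedSpace.exp (-U) - 1)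
            (lp.single 2 (k : ℕ) 1)) (j : ℕ)) := by
  classical
  set EL := NormedSpace.exp (-L) with hEL
  set EM := NormedSpace.exp (L + U) with hEM
  set EU := NormedSpace.exp (-U) with hEU
  have hL' : ∀ m, P m * (-L) = P m * (-L) * P m := fun m => by
    simp only [mul_neg, neg_mul, neg_inj]; exact (hL m).symm
  have hU' : ∀ m, (-U) * P m = P m * (-U) * P m := fun m => by
    simp only [mul_neg, neg_mul, neg_inj]; exact (hU m).symm
  have hRHS : (Matrix.of fun j k : Fin n =>
      (if j = k then 1 else 0) +
        ((EL * EM * EU - 1) (lp.single 2 (k : ℕ) 1)) (j : ℕ)) = blk n (EL * EM * EU) := by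
    ext j k
    show (if j = k then 1 else 0)
        + ((EL * EM * EU - 1) (e (k : ℕ)) : ∀ _ : ℕ, ℂ) (j : ℕ)
      = ev (j : ℕ) ((EL * EM * EU) (e (k : ℕ)))
    rw [ContinuousLinearMap.sub_apply, ContinuousLinearMap.one_apply, lp.coeFn_sub,
      Pi.sub_apply, e_apply, ev_apply]
    rcases eq_or_ne j k with h | h
    · subst h; simp
    · have : (j : ℕ) ≠ (k : ℕ) := fun hc => h (by ext; exact hc)
      simp [h, this]
  have hmul : blk n (EL * EM * EU) = blk n EL * blk n EM * blk n EU := by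
    rw [blk_mul_right P hP (EL * EM) (fun m => right_exp P hP hU' m) n,
      blk_mul_left P hP (fun m => left_exp P hP hL' m) EM n]
  have dL : (blk n EL).det
      = Complex.exp (∑ j : Fin n, ev (j : ℕ) ((-L) (e (j : ℕ)))) :=
    det_exp_left P hP hL' n
  have dU : (blk n EU).det
      = Complex.exp (∑ j : Fin n, ev (j : ℕ) ((-U) (e (j : ℕ)))) :=
    det_exp_right P hP hU' n
  have hLHSM : (Matrix.of fun j k : Fin n =>
      (EM (lp.single 2 (k : ℕ) 1)) (j : ℕ)) = blk n EM := rfl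
  rw [hLHSM, hRHS, hmul, Matrix.det_mul, Matrix.det_mul, dL, dU]
  have hsum : (-(∑ j : Fin n, ((L + U) (lp.single 2 (j : ℕ) 1)) (j : ℕ)))
      = (∑ j : Fin n, ev (j : ℕ) ((-L) (e (j : ℕ))))
        + (∑ j : Fin n, ev (j : ℕ) ((-U) (e (j : ℕ)))) := by
    simp only [ev_apply, ContinuousLinearMap.neg_apply, lp.coeFn_neg, Pi.neg_apply,
      ContinuousLinearMap.add_apply, lp.coeFn_add, Pi.add_apply]
    rw [Finset.sum_add_distrib]
    show -(((∑ j : Fin n, (L (e (j : ℕ)) : ∀ _ : ℕ, ℂ) (j : ℕ))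
        + ∑ j : Fin n, (U (e (j : ℕ)) : ∀ _ : ℕ, ℂ) (j : ℕ)))
      = (∑ j : Fin n, -(L (e (j : ℕ)) : ∀ _ : ℕ, ℂ) (j : ℕ))
        + ∑ j : Fin n, -(U (e (j : ℕ)) : ∀ _ : ℕ, ℂ) (j : ℕ)
    rw [Finset.sum_neg_distrib, Finset.sum_neg_distrib]
    ring
  rw [hsum, Complex.exp_add]
  ring
end
end

section
/- Define Laurent polynomials s_k, v_k by the recurrence (s_k, v_k)ᵀ = M(z)·(s_{k-1}, v_{k-1})ᵀ with (s₀,v₀) = (1,0), where M(z) is the 2×2 matrix with entries M₁₁ = s₁(z) = −|α|² + ρ²/z, M₁₂ = −z v₁(z), M₂₁ = v₁(z) = −|α|ρ(1 + 1/z), M₂₂ = s₁(1/z), and ρ = √(1−|α|²) for fixed α with |α| < 1. Then for all k ≥ 0 and z = e^{iθ}, with ω = 2 arccos(ρ cos(θ/2)): s_k(z) = cos(kω) − i·(sin(kω)/sin(ω/2))·ρ sin(θ/2) and v_k(z) = −(sin(kω)/sin(ω/2))·|α|·e^{−iθ/2}. -/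
/-- The pair `(s_k, v_k)` of Laurent polynomials from the constant-Verblunsky
recurrence: `(s_k, v_k)ᵀ = M(z)(s_{k-1}, v_{k-1})ᵀ`, `(s₀,v₀) = (1,0)`, with
`M₁₁ = s₁(z) = −|α|² + ρ²/z`, `M₁₂ = −z v₁(z)`, `M₂₁ = v₁(z) = −|α|ρ(1+1/z)`,
`M₂₂ = s₁(1/z)`, `ρ = √(1−|α|²)`. -/
noncomputable def svSeq (α z : ℂ) : ℕ → ℂ × ℂ
  | 0 => (1, 0)
  | k + 1 =>
    let a : ℝ := ‖α‖
    let ρ : ℝ := Real.sqrt (1 - a ^ 2)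
    let s1 : ℂ := -(a : ℂ) ^ 2 + (ρ : ℂ) ^ 2 / z
    let s1t : ℂ := -(a : ℂ) ^ 2 + (ρ : ℂ) ^ 2 * z
    let v1 : ℂ := -(a : ℂ) * (ρ : ℂ) * (1 + 1 / z)
    let p := svSeq α z k
    (s1 * p.1 - z * v1 * p.2, v1 * p.1 + s1t * p.2)

private lemma key_step (a r c s w C T C' T' : ℝ) (z E : ℂ)
    (h1 : s ^ 2 + c ^ 2 = 1) (h2 : r ^ 2 = 1 - a ^ 2) (h3 : w ^ 2 = 1 - r ^ 2 * c ^ 2)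
    (hz : z = ((c : ℂ) + Complex.I * (s : ℂ)) ^ 2)
    (hz1 : 1 / z = ((c : ℂ) - Complex.I * (s : ℂ)) ^ 2)
    (hE : E = (c : ℂ) - Complex.I * (s : ℂ))
    (hC' : C' = C * (2 * r ^ 2 * c ^ 2 - 1) - 2 * r * c * w ^ 2 * T)
    (hT' : T' = T * (2 * r ^ 2 * c ^ 2 - 1) + 2 * r * c * C) :
    ((-(a : ℂ) ^ 2 + (r : ℂ) ^ 2 / z) * ((C : ℂ) - Complex.I * (T : ℂ) * (r : ℂ) * (s : ℂ)) -
        z * (-(a : ℂ) * (r : ℂ) * (1 + 1 / z)) * (-(T : ℂ) * (a : ℂ) * E) =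
      (C' : ℂ) - Complex.I * (T' : ℂ) * (r : ℂ) * (s : ℂ)) ∧
    ((-(a : ℂ) * (r : ℂ) * (1 + 1 / z)) * ((C : ℂ) - Complex.I * (T : ℂ) * (r : ℂ) * (s : ℂ)) +
        (-(a : ℂ) ^ 2 + (r : ℂ) ^ 2 * z) * (-(T : ℂ) * (a : ℂ) * E) =
      -(T' : ℂ) * (a : ℂ) * E) := by
  have h1c : (s : ℂ) ^ 2 + (c : ℂ) ^ 2 = 1 := by exact_mod_cast h1
  have h2c : (r : ℂ) ^ 2 = 1 - (a : ℂ) ^ 2 := by exact_mod_cast h2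
  have h3c : (w : ℂ) ^ 2 = 1 - (r : ℂ) ^ 2 * (c : ℂ) ^ 2 := by exact_mod_cast h3
  have hC'c : (C' : ℂ) = (C : ℂ) * (2 * (r : ℂ) ^ 2 * (c : ℂ) ^ 2 - 1) -
      2 * (r : ℂ) * (c : ℂ) * (w : ℂ) ^ 2 * (T : ℂ) := by
    rw [hC']; push_cast; ring
  have hT'c : (T' : ℂ) = (T : ℂ) * (2 * (r : ℂ) ^ 2 * (c : ℂ) ^ 2 - 1) +
      2 * (r : ℂ) * (c : ℂ) * (C : ℂ) := by
    rw [hT']; push_cast; ring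
  constructor
  · rw [hC'c, hT'c, hE, div_eq_mul_one_div ((r : ℂ) ^ 2) z, hz1, hz]
    linear_combination
      (-(C:ℂ) + (a:ℂ)^2*(C:ℂ) - 2*(r:ℂ)*(c:ℂ)*(T:ℂ) - (r:ℂ)*(a:ℂ)^2*(c:ℂ)^3*(T:ℂ)
        + Complex.I*(r:ℂ)*(s:ℂ)*(T:ℂ) - Complex.I*(r:ℂ)*(s:ℂ)*(a:ℂ)^2*(T:ℂ)
        + Complex.I*(r:ℂ)*(s:ℂ)*(a:ℂ)^2*(c:ℂ)^2*(T:ℂ)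
        + Complex.I^2*(r:ℂ)*(s:ℂ)^2*(a:ℂ)^2*(c:ℂ)*(T:ℂ)
        - Complex.I^3*(r:ℂ)*(s:ℂ)^3*(a:ℂ)^2*(T:ℂ)) * h1c
      + (-((c:ℂ)^2*(C:ℂ)) - (s:ℂ)^2*(C:ℂ) - 2*(r:ℂ)*(c:ℂ)^3*(T:ℂ)
        - 2*(r:ℂ)*(s:ℂ)^2*(c:ℂ)*(T:ℂ) + Complex.I*(r:ℂ)*(s:ℂ)*(c:ℂ)^2*(T:ℂ)
        + Complex.I*(r:ℂ)*(s:ℂ)^3*(T:ℂ)) * h2c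
      + (2*(r:ℂ)*(c:ℂ)*(T:ℂ)) * h3c
      + (2*(r:ℂ)*(s:ℂ)^2*(a:ℂ)^2*(c:ℂ)*(T:ℂ) + (r:ℂ)*(s:ℂ)^2*(a:ℂ)^2*(c:ℂ)^3*(T:ℂ)
        + (r:ℂ)^2*(s:ℂ)^2*(C:ℂ) + 2*(r:ℂ)^3*(s:ℂ)^2*(c:ℂ)*(T:ℂ)
        - Complex.I*(r:ℂ)*(s:ℂ)^3*(a:ℂ)^2*(c:ℂ)^2*(T:ℂ) - Complex.I*(r:ℂ)^3*(s:ℂ)^3*(T:ℂ)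
        - Complex.I^2*(r:ℂ)*(s:ℂ)^4*(a:ℂ)^2*(c:ℂ)*(T:ℂ)
        + Complex.I^3*(r:ℂ)*(s:ℂ)^5*(a:ℂ)^2*(T:ℂ)) * Complex.I_sq
  · rw [hT'c, hE, hz1, hz]
    linear_combination
      ((a:ℂ)*(c:ℂ)*(T:ℂ) - (a:ℂ)^3*(c:ℂ)*(T:ℂ) + (r:ℂ)*(a:ℂ)*(C:ℂ)
        - 2*Complex.I*(s:ℂ)*(a:ℂ)*(T:ℂ) + 2*Complex.I*(s:ℂ)*(a:ℂ)^3*(T:ℂ)) * h1c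
      + ((a:ℂ)*(c:ℂ)^3*(T:ℂ) + (s:ℂ)^2*(a:ℂ)*(c:ℂ)*(T:ℂ) + Complex.I*(s:ℂ)*(a:ℂ)*(T:ℂ)
        - 2*Complex.I*(s:ℂ)*(a:ℂ)*(c:ℂ)^2*(T:ℂ) - 2*Complex.I*(s:ℂ)^3*(a:ℂ)*(T:ℂ)) * h2c
      + (-((r:ℂ)*(s:ℂ)^2*(a:ℂ)*(C:ℂ)) - (r:ℂ)^2*(s:ℂ)^2*(a:ℂ)*(c:ℂ)*(T:ℂ)
        + 2*Complex.I*(r:ℂ)^2*(s:ℂ)^3*(a:ℂ)*(T:ℂ)) * Complex.I_sq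

/-- For `z = e^{iθ}`, `θ ∈ (0,2π)`, and `ω = 2 arccos(ρ cos(θ/2))`:
`s_k(z) = cos(kω) − i (sin(kω)/sin(ω/2)) ρ sin(θ/2)` and
`v_k(z) = −(sin(kω)/sin(ω/2)) |α| e^{−iθ/2}`. -/
theorem stmt15 (α : ℂ) (hα : ‖α‖ < 1) (θ : ℝ)
    (hθ : θ ∈ Set.Ioo 0 (2 * Real.pi)) (k : ℕ) :
    (svSeq α (Complex.exp (θ * Complex.I)) k).1 =
        ((Real.cos (k * (2 * Real.arccos (Real.sqrt (1 - ‖α‖ ^ 2) *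
            Real.cos (θ / 2)))) : ℝ) : ℂ) -
          Complex.I * ((Real.sin (k * (2 * Real.arccos (Real.sqrt (1 - ‖α‖ ^ 2) *
              Real.cos (θ / 2)))) / Real.sin ((2 * Real.arccos (Real.sqrt (1 - ‖α‖ ^ 2) *
              Real.cos (θ / 2))) / 2) : ℝ) : ℂ) *
            ((Real.sqrt (1 - ‖α‖ ^ 2) : ℝ) : ℂ) * ((Real.sin (θ / 2) : ℝ) : ℂ) ∧
      (svSeq α (Complex.exp (θ * Complex.I)) k).2 =
        -((Real.sin (k * (2 * Real.arccos (Real.sqrt (1 - ‖α‖ ^ 2) *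
            Real.cos (θ / 2)))) / Real.sin ((2 * Real.arccos (Real.sqrt (1 - ‖α‖ ^ 2) *
            Real.cos (θ / 2))) / 2) : ℝ) : ℂ) * ((‖α‖ : ℝ) : ℂ) *
          Complex.exp (-(θ / 2 : ℝ) * Complex.I) := by
  obtain ⟨hθ0, hθπ⟩ := hθ
  set a : ℝ := ‖α‖ with ha
  set r : ℝ := Real.sqrt (1 - a ^ 2) with hr
  set c : ℝ := Real.cos (θ / 2) with hc
  set s : ℝ := Real.sin (θ / 2) with hs
  set ω : ℝ := 2 * Real.arccos (r * c) with hω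
  set w : ℝ := Real.sin (ω / 2) with hw
  have ha0 : 0 ≤ a := norm_nonneg α
  have h1 : s ^ 2 + c ^ 2 = 1 := Real.sin_sq_add_cos_sq (θ / 2)
  have h2 : r ^ 2 = 1 - a ^ 2 := Real.sq_sqrt (by nlinarith)
  have hr0 : 0 ≤ r := Real.sqrt_nonneg _
  have hr1 : r ≤ 1 := Real.sqrt_le_one.mpr (by nlinarith)
  have hs_pos : 0 < s := Real.sin_pos_of_pos_of_lt_pi (by linarith) (by linarith)
  have hc2 : c ^ 2 < 1 := by nlinarith
  have hb2 : (r * c) ^ 2 < 1 := by nlinarith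
  have hb_lo : -1 ≤ r * c := by nlinarith [sq_nonneg (r * c + 1)]
  have hb_hi : r * c ≤ 1 := by nlinarith [sq_nonneg (r * c - 1)]
  have hω2 : ω / 2 = Real.arccos (r * c) := by rw [hω]; ring
  have hcoshalf : Real.cos (ω / 2) = r * c := by rw [hω2]; exact Real.cos_arccos hb_lo hb_hi
  have h3 : w ^ 2 = 1 - r ^ 2 * c ^ 2 := by
    have hpyth := Real.sin_sq_add_cos_sq (ω / 2)
    rw [hcoshalf] at hpyth
    rw [hw]; linear_combination hpyth
  have hw_pos : 0 < w := by
    rw [hw, hω2, Real.sin_arccos]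
    exact Real.sqrt_pos.mpr (by nlinarith)
  have hcosω : Real.cos ω = 2 * (r * c) ^ 2 - 1 := by
    have h := Real.cos_two_mul (ω / 2)
    rw [show (2 : ℝ) * (ω / 2) = ω by ring, hcoshalf] at h
    exact h
  have hsinω : Real.sin ω = 2 * w * (r * c) := by
    have h := Real.sin_two_mul (ω / 2)
    rw [show (2 : ℝ) * (ω / 2) = ω by ring, hcoshalf, ← hw] at h
    linarith [h]
  have hz : Complex.exp (θ * Complex.I) = ((c : ℂ) + Complex.I * (s : ℂ)) ^ 2 := by
    rw [show ((θ : ℂ) * Complex.I) = ((θ / 2 : ℝ) : ℂ) * Complex.I + ((θ / 2 : ℝ) : ℂ) * Complex.I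
      by push_cast; ring, Complex.exp_add, Complex.exp_mul_I, ← Complex.ofReal_cos,
      ← Complex.ofReal_sin, ← hc, ← hs]
    ring
  have hmul : ((c : ℂ) + Complex.I * (s : ℂ)) * ((c : ℂ) - Complex.I * (s : ℂ)) = 1 := by
    have h1c : (s : ℂ) ^ 2 + (c : ℂ) ^ 2 = 1 := by exact_mod_cast h1
    linear_combination h1c - (s : ℂ) ^ 2 * Complex.I_sq
  have hz1 : 1 / Complex.exp (θ * Complex.I) = ((c : ℂ) - Complex.I * (s : ℂ)) ^ 2 := by
    rw [one_div, hz, ← inv_pow, inv_eq_of_mul_eq_one_right hmul]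
  have hE : Complex.exp (-(θ / 2 : ℝ) * Complex.I) = (c : ℂ) - Complex.I * (s : ℂ) := by
    rw [Complex.exp_mul_I, ← Complex.ofReal_neg, ← Complex.ofReal_cos, ← Complex.ofReal_sin, Real.cos_neg,
      Real.sin_neg, ← hc, ← hs]
    push_cast; ring
  induction k with
  | zero => simp [svSeq]
  | succ k ih =>
    obtain ⟨ih1, ih2⟩ := ih
    have hk : ((k + 1 : ℕ) : ℝ) * ω = (k : ℝ) * ω + ω := by push_cast; ring
    have hCp : Real.cos ((k + 1 : ℕ) * ω) = Real.cos ((k : ℝ) * ω) * (2 * r ^ 2 * c ^ 2 - 1) -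
        2 * r * c * w ^ 2 * (Real.sin ((k : ℝ) * ω) / w) := by
      rw [hk, Real.cos_add, hcosω, hsinω]
      field_simp
    have hTp : Real.sin ((k + 1 : ℕ) * ω) / w =
        (Real.sin ((k : ℝ) * ω) / w) * (2 * r ^ 2 * c ^ 2 - 1) +
          2 * r * c * Real.cos ((k : ℝ) * ω) := by
      rw [hk, Real.sin_add, hcosω, hsinω]
      field_simp
    simp only [svSeq]
    rw [← ha, ← hr, ih1, ih2]
    exact key_step a r c s w (Real.cos ((k : ℝ) * ω)) (Real.sin ((k : ℝ) * ω) / w)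
      (Real.cos ((k + 1 : ℕ) * ω)) (Real.sin ((k + 1 : ℕ) * ω) / w)
      (Complex.exp (θ * Complex.I)) (Complex.exp (-(θ / 2 : ℝ) * Complex.I))
      h1 h2 h3 hz hz1 hE hCp hTp
end

section
/- With s_k and v_k as in the constant-Verblunsky recurrence (s₁(z) = −|α|² + ρ²/z, v₁(z) = −|α|ρ(1+1/z), ρ = √(1−|α|²)), the identities v_k(z) = −(|α|/ρ)·(s_k(1/z) − s_k(z))/(z − 1) and v_k(1/z) = z·v_k(z) hold for all k ∈ ℤ, where s_{−k}(z) = s_k(1/z) and v_{−k} = −v_k. -/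
/-- `s_k` for `k ∈ ℤ`, with `s_{−k}(z) = s_k(1/z)`. -/
noncomputable def sZ (α z : ℂ) (k : ℤ) : ℂ :=
  if 0 ≤ k then (svSeq α z k.toNat).1 else (svSeq α z⁻¹ (-k).toNat).1

/-- `v_k` for `k ∈ ℤ`, with `v_{−k} = −v_k`. -/
noncomputable def vZ (α z : ℂ) (k : ℤ) : ℂ :=
  if 0 ≤ k then (svSeq α z k.toNat).2 else -(svSeq α z (-k).toNat).2

lemma svAux (α z : ℂ) (hz : z ≠ 0) (n : ℕ) :
    (svSeq α z⁻¹ n).2 = z * (svSeq α z n).2 ∧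
    ((‖α‖ : ℝ) : ℂ) * ((svSeq α z⁻¹ n).1 - (svSeq α z n).1)
      = -((z - 1) * ((Real.sqrt (1 - ‖α‖ ^ 2) : ℝ) : ℂ) * (svSeq α z n).2) := by
  have h : z * z⁻¹ = 1 := mul_inv_cancel₀ hz
  induction n with
  | zero => simp [svSeq]
  | succ n ih =>
    obtain ⟨hA, hB⟩ := ih
    set a : ℂ := ((‖α‖ : ℝ) : ℂ) with ha
    set r : ℂ := ((Real.sqrt (1 - ‖α‖ ^ 2) : ℝ) : ℂ) with hr
    set P1 := (svSeq α z n).1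
    set P2 := (svSeq α z n).2
    set Q1 := (svSeq α z⁻¹ n).1
    set Q2 := (svSeq α z⁻¹ n).2
    simp only [svSeq, ← ha, ← hr, div_eq_mul_inv, inv_inv, one_mul]
    constructor
    · linear_combination (-a^2+r^2*z⁻¹)*hA + (-(r)*(1+z))*hB + (a*r*P1 + r^2*P2)*h
    · linear_combination (a^2*r*z⁻¹*(1+z))*hA + (-a^2+r^2*z)*hB + (a^2*r*z*P2 - a*r^2*P1)*h

/-- The identities `v_k(z) = −(|α|/ρ)(s_k(1/z) − s_k(z))/(z−1)` and
`v_k(1/z) = z v_k(z)` hold for all `k ∈ ℤ`. -/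
theorem stmt16 (α : ℂ) (hα : ‖α‖ < 1) (z : ℂ) (hz : z ≠ 0) (hz1 : z ≠ 1) (k : ℤ) :
    vZ α z k = -(((‖α‖ : ℝ) : ℂ) / ((Real.sqrt (1 - ‖α‖ ^ 2) : ℝ) : ℂ)) *
        (sZ α z⁻¹ k - sZ α z k) / (z - 1) ∧
      vZ α z⁻¹ k = z * vZ α z k := by
  have hr0 : ((Real.sqrt (1 - ‖α‖ ^ 2) : ℝ) : ℂ) ≠ 0 := by
    rw [Complex.ofReal_ne_zero]
    exact ne_of_gt (Real.sqrt_pos.mpr (by nlinarith [norm_nonneg α]))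
  have hz1' : z - 1 ≠ 0 := sub_ne_zero.mpr hz1
  rcases le_or_gt 0 k with h0 | h0
  · obtain ⟨hA, hB⟩ := svAux α z hz k.toNat
    simp only [vZ, sZ, if_pos h0]
    refine ⟨?_, hA⟩
    have hrr : ((Real.sqrt (1 - ‖α‖ ^ 2) : ℝ) : ℂ) *
        ((Real.sqrt (1 - ‖α‖ ^ 2) : ℝ) : ℂ)⁻¹ = 1 := mul_inv_cancel₀ hr0
    have hzz : (z - 1) * (z - 1)⁻¹ = 1 := mul_inv_cancel₀ hz1'
    linear_combination (((Real.sqrt (1 - ‖α‖ ^ 2) : ℝ) : ℂ)⁻¹ * (z-1)⁻¹) * hB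
      - ((z-1) * (z-1)⁻¹ * (svSeq α z k.toNat).2) * hrr - (svSeq α z k.toNat).2 * hzz
  · obtain ⟨hA, hB⟩ := svAux α z hz (-k).toNat
    simp only [vZ, sZ, if_neg (not_le.mpr h0), inv_inv]
    refine ⟨?_, by rw [hA]; ring⟩
    have hrr : ((Real.sqrt (1 - ‖α‖ ^ 2) : ℝ) : ℂ) *
        ((Real.sqrt (1 - ‖α‖ ^ 2) : ℝ) : ℂ)⁻¹ = 1 := mul_inv_cancel₀ hr0
    have hzz : (z - 1) * (z - 1)⁻¹ = 1 := mul_inv_cancel₀ hz1'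
    linear_combination (-(((Real.sqrt (1 - ‖α‖ ^ 2) : ℝ) : ℂ)⁻¹ * (z-1)⁻¹)) * hB
      + ((z-1) * (z-1)⁻¹ * (svSeq α z (-k).toNat).2) * hrr + (svSeq α z (-k).toNat).2 * hzz
end
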